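/- Let B be a commutative ring, t, e_1, ..., e_r ∈ B nilpotent elements, M = ⊕_{i=0}^{N} M_i a graded B-module with e_k · M_i ⊆ M_{i+1} for all k, i (and e_k · M_N = 0), and T : M → M the B-linear map acting by (1+t)^(-i) on M_i. Then for every α ∈ M: T( (∏_{k=1}^{r} (1+e_k)) · α ) = (∏_{k=1}^{r} (1+e_k+t)) · (1+t)^(-r) · T(α). -/

import Mathlib

/-- Rank-`r` version of Aluffi's tensor formula: with Chern roots `e_1, ..., e_r`
(nilpotent, raising the grading by one and killing top degree) and `t` nilpotent with
unit `v = 1 + t`, and `T` acting by `(1+t)^(-i)` on `M_i`, one has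
`T((∏_k (1+e_k))·α) = (∏_k (1+e_k+t))·(1+t)^(-r)·T(α)`. -/
theorem stmt_6 (B : Type*) [CommRing B] (M : Type*) [AddCommGroup M] [Module B M]
    (N r : ℕ) (P : ℕ → Submodule B M)
    (hdec : DirectSum.IsInternal fun i => P i)
    (htop : ∀ i, N < i → P i = ⊥)
    (t : B) (ht : IsNilpotent t) (v : Bˣ) (hv : (v : B) = 1 + t)
    (e : Fin r → B) (he : ∀ k, IsNilpotent (e k))
    (hraise : ∀ (k : Fin r) (i : ℕ), ∀ α ∈ P i, e k • α ∈ P (i + 1))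
    (T : M →ₗ[B] M)
    (hT : ∀ i, ∀ α ∈ P i, T α = (((v⁻¹ : Bˣ) : B)) ^ i • α) :
    ∀ α : M,
      T ((∏ k, (1 + e k)) • α)
        = ((∏ k, (1 + e k + t)) * ((v⁻¹ : Bˣ) : B) ^ r) • T α := by
  set u : B := ((v⁻¹ : Bˣ) : B) with hu
  have huv : u * (v : B) = 1 := by rw [hu]; exact_mod_cast Units.inv_mul v
  -- key computation on homogeneous elements, by induction on the rank
  have key : ∀ (r : ℕ) (e : Fin r → B)
      (_ : ∀ (k : Fin r) (i : ℕ), ∀ α ∈ P i, e k • α ∈ P (i + 1))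
      (i : ℕ) (α : M), α ∈ P i →
      T ((∏ k, (1 + e k)) • α)
        = ((∏ k, (1 + e k * u)) * u ^ i) • α := by
    intro r
    induction r with
    | zero =>
      intro e _ i α hα
      simpa using hT i α hα
    | succ n ih =>
      intro e hr i α hα
      have h0 : e 0 • α ∈ P (i + 1) := hr 0 i α hα
      set c : B := ∏ k : Fin n, (1 + e k.succ) with hc
      set c' : B := ∏ k : Fin n, (1 + e k.succ * u) with hc'
      have e1 : (∏ k, (1 + e k)) = c + c * e 0 := by
        rw [Fin.prod_univ_succ, hc]; ring
      have e2 : (∏ k : Fin (n + 1), (1 + e k * u)) = (1 + e 0 * u) * c' := by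
        rw [Fin.prod_univ_succ]
      have hr' : ∀ (k : Fin n) (i : ℕ), ∀ α ∈ P i, e k.succ • α ∈ P (i + 1) :=
        fun k => hr k.succ
      have ih1 := ih (fun k => e k.succ) hr' i α hα
      have ih2 := ih (fun k => e k.succ) hr' (i + 1) (e 0 • α) h0
      beta_reduce at ih1 ih2
      rw [← hc, ← hc'] at ih1 ih2
      have ih2' : T ((c * e 0) • α) = (c' * u ^ (i + 1) * e 0) • α := by
        rw [mul_smul, ih2, smul_smul]
      rw [e1, e2, add_smul, map_add, ih1, ih2', ← add_smul]
      congr 1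
      ring
  intro α
  -- coefficient identity
  have hcoef : (∏ k, (1 + e k + t)) * u ^ r = ∏ k, (1 + e k * u) := by
    have : ∀ k : Fin r, 1 + e k + t = (1 + e k * u) * (v : B) := by
      intro k
      have : (1 + e k * u) * (v : B) = (v : B) + e k * (u * (v : B)) := by ring
      rw [this, huv, hv]; ring
    calc (∏ k, (1 + e k + t)) * u ^ r
        = (∏ k, ((1 + e k * u) * (v : B))) * u ^ r := by
          rw [Finset.prod_congr rfl fun k _ => this k]
      _ = (∏ k, (1 + e k * u)) * ((v : B) * u) ^ r := by
          rw [Finset.prod_mul_distrib, Finset.prod_const, Finset.card_univ,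
            Fintype.card_fin]
          ring
      _ = ∏ k, (1 + e k * u) := by
          rw [mul_comm (v : B) u, huv, one_pow, mul_one]
  -- reduce to homogeneous elements
  have hmem : α ∈ ⨆ i, P i := by
    rw [hdec.submodule_iSup_eq_top]; trivial
  refine Submodule.iSup_induction (motive := fun α =>
      T ((∏ k, (1 + e k)) • α) = ((∏ k, (1 + e k + t)) * u ^ r) • T α) P hmem ?_ ?_ ?_
  · intro i x hx
    rw [key r e hraise i x hx, hT i x hx, smul_smul, hcoef, mul_comm]
  · simp
  · intro x y hx hy
    rw [smul_add, map_add, map_add, smul_add, hx, hy]
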